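/- Let 0 < q < 1, x ∈ ℝ, and m, y with 0 < 2y < m. Write F = ₂F₂(1, m+2+q+ix; m+2, m+3+q+ix; y). Then ((m+2+q)² + x²)·|Re F - ₁F₁(1; m+2; y)| ≤ 5y and ((m+2+q)² + x²)·|Im F| ≤ 5|x|. -/

import Mathlib

open Complex

/-- The Kummer function `₁F₁(1; m+2; y)`. -/
noncomputable def kummer1F1 (m : ℕ) (y : ℝ) : ℝ :=
  ∑' k : ℕ, y ^ k / ∏ i ∈ Finset.range k, ((m : ℝ) + 2 + (i : ℝ))

/-- `₂F₂(1, a; m+2, a+1; y)` with `a = m+2+q+ix`, written as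
`Σ_{k≥0} [y^k/((m+2)⋯(m+k+1))] ⬝ a/(a+k)`. -/
noncomputable def kummer2F2 (m : ℕ) (q x y : ℝ) : ℂ :=
  ∑' k : ℕ, ((y ^ k / ∏ i ∈ Finset.range k, ((m : ℝ) + 2 + (i : ℝ)) : ℝ) : ℂ) *
    (((m : ℂ) + 2 + (q : ℂ) + (x : ℂ) * Complex.I) /
      ((m : ℂ) + 2 + (q : ℂ) + (x : ℂ) * Complex.I + (k : ℂ)))

private lemma abs_hasSum_le {v b : ℕ → ℝ} {V B : ℝ} (hv : HasSum v V) (hb : HasSum b B)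
    (h : ∀ k, |v k| ≤ b k) : |V| ≤ B := by
  have hsv : Summable fun k => |v k| :=
    Summable.of_nonneg_of_le (fun k => abs_nonneg _) h hb.summable
  calc |V| = |∑' k, v k| := by rw [hv.tsum_eq]
    _ ≤ ∑' k, |v k| := by
        simpa [Real.norm_eq_abs] using
          norm_tsum_le_tsum_norm (f := v) (by simpa [Real.norm_eq_abs] using hsv)
    _ ≤ ∑' k, b k := Summable.tsum_le_tsum h hsv hb.summable
    _ = B := hb.tsum_eq

set_option maxHeartbeats 1000000 in
theorem kummer2F2_approx (m : ℕ) (q x y : ℝ) (hq0 : 0 < q) (hq1 : q < 1)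
    (hy : 0 < y) (hm : 2 * y < m) :
    (((m : ℝ) + 2 + q) ^ 2 + x ^ 2) * |(kummer2F2 m q x y).re - kummer1F1 m y| ≤ 5 * y ∧
    (((m : ℝ) + 2 + q) ^ 2 + x ^ 2) * |(kummer2F2 m q x y).im| ≤ 5 * |x| := by
  have hM1 : (1:ℝ) ≤ (m:ℝ) := by
    have hm0 : 0 < m := by
      by_contra h
      push_neg at h
      interval_cases m
      · push_cast at hm; linarith
    exact_mod_cast hm0
  set M : ℝ := (m:ℝ) with hMdef
  have h02 : (0:ℝ) < M + 2 := by linarith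
  set c : ℝ := M + 2 + q with hcdef
  have hc0 : 0 < c := by simp only [hcdef]; linarith
  set r : ℝ := y / (M + 2) with hrdef
  have hr0 : 0 < r := by positivity
  have hr2 : 2 * r < 1 := by
    have h : 2 * r = (2 * y) / (M + 2) := by rw [hrdef]; ring
    rw [h, div_lt_one h02]
    linarith
  have hr1 : r < 1 := by linarith
  set t : ℕ → ℝ := fun k => y ^ k / ∏ i ∈ Finset.range k, (M + 2 + (i : ℝ)) with htdef
  set a : ℂ := (m : ℂ) + 2 + (q : ℂ) + (x : ℂ) * Complex.I with hadef
  set g : ℕ → ℂ := fun k => a / (a + (k : ℂ)) with hgdef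
  set f : ℕ → ℂ := fun k => ((t k : ℝ) : ℂ) * g k with hfdef
  set D : ℕ → ℝ := fun k => (c + (k:ℝ))^2 + x^2 with hDdef
  set A : ℝ := (M + 4) / (M + 2) with hAdef
  -- basic positivity
  have hP : ∀ k : ℕ, 0 < ∏ i ∈ Finset.range k, (M + 2 + (i : ℝ)) := by
    intro k
    apply Finset.prod_pos
    intro i _
    have : (0:ℝ) ≤ (i:ℝ) := Nat.cast_nonneg i
    linarith
  have ht0 : ∀ k, 0 < t k := by
    intro k
    simp only [htdef]
    exact div_pos (pow_pos hy k) (hP k)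
  have htr : ∀ k, t k ≤ r ^ k := by
    intro k
    have h1 : (M + 2)^k ≤ ∏ i ∈ Finset.range k, (M + 2 + (i : ℝ)) := by
      calc (M + 2)^k = ∏ _i ∈ Finset.range k, (M + 2) := by
            rw [Finset.prod_const, Finset.card_range]
        _ ≤ ∏ i ∈ Finset.range k, (M + 2 + (i : ℝ)) := by
            apply Finset.prod_le_prod
            · intro i _; linarith
            · intro i _
              have : (0:ℝ) ≤ (i:ℝ) := Nat.cast_nonneg i
              linarith
    calc t k ≤ y ^ k / (M + 2)^k := by
          simp only [htdef]
          exact div_le_div_of_nonneg_left (by positivity) (by positivity) h1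
      _ = r ^ k := by rw [hrdef, div_pow]
  have hck : ∀ k : ℕ, 0 < c + (k:ℝ) := by
    intro k
    have : (0:ℝ) ≤ (k:ℝ) := Nat.cast_nonneg k
    linarith
  have hD0 : ∀ k, 0 < D k := by
    intro k
    simp only [hDdef]
    have := hck k
    positivity
  have hcx0 : (0:ℝ) ≤ c^2 + x^2 := by positivity
  have hcxD : ∀ k, c^2 + x^2 ≤ D k := by
    intro k
    simp only [hDdef]
    have h1 := hck k
    have h2 : (0:ℝ) ≤ (k:ℝ) := Nat.cast_nonneg k
    nlinarith [hc0]
  -- re/im computations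
  have haRe : a.re = c := by simp [hadef, hcdef, hMdef]
  have haIm : a.im = x := by simp [hadef]
  have hakRe : ∀ k : ℕ, (a + (k:ℂ)).re = c + (k:ℝ) := by
    intro k; simp [Complex.add_re, haRe]
  have hakIm : ∀ k : ℕ, (a + (k:ℂ)).im = x := by
    intro k; simp [Complex.add_im, haIm]
  have hnsq : ∀ k : ℕ, Complex.normSq (a + (k:ℂ)) = D k := by
    intro k
    rw [Complex.normSq_apply, hakRe k, hakIm k]
    simp only [hDdef]; ring
  have hgre : ∀ k : ℕ, (g k).re = (c * (c + (k:ℝ)) + x^2) / D k := by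
    intro k
    simp only [hgdef]
    rw [Complex.div_re, hnsq k, hakRe k, hakIm k, haRe, haIm, ← add_div]
    ring_nf
  have hgim : ∀ k : ℕ, (g k).im = ((k:ℝ) * x) / D k := by
    intro k
    simp only [hgdef]
    rw [Complex.div_im, hnsq k, hakRe k, hakIm k, haRe, haIm, div_sub_div_same]
    ring_nf
  have hgre1 : ∀ k : ℕ, (g k).re - 1 = -((k:ℝ) * (c + (k:ℝ))) / D k := by
    intro k
    rw [hgre k, eq_div_iff (hD0 k).ne', sub_mul, div_mul_cancel₀ _ (hD0 k).ne']
    simp only [hDdef]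
    ring
  -- summability
  have hgeom : Summable fun k : ℕ => r ^ k := summable_geometric_of_lt_one hr0.le hr1
  have hsumt : Summable t :=
    Summable.of_nonneg_of_le (fun k => (ht0 k).le) htr hgeom
  have hgnorm : ∀ k : ℕ, ‖g k‖ ≤ 1 := by
    intro k
    simp only [hgdef]
    rw [norm_div]
    have hieq : ‖a‖ ≤ ‖a + (k:ℂ)‖ := by
      rw [Complex.norm_def, Complex.norm_def]
      apply Real.sqrt_le_sqrt
      rw [Complex.normSq_apply, Complex.normSq_apply, haRe, haIm, hakRe k, hakIm k]
      have h1 := hck k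
      have h2 : (0:ℝ) ≤ (k:ℝ) := Nat.cast_nonneg k
      nlinarith [hc0]
    rcases eq_or_ne (a + (k:ℂ)) 0 with h | h
    · simp [h]
    · rw [div_le_one (norm_pos_iff.2 h)]; exact hieq
  have hsumf : Summable f := by
    apply Summable.of_norm_bounded hgeom
    intro k
    simp only [hfdef]
    rw [norm_mul, Complex.norm_real, Real.norm_eq_abs, _root_.abs_of_nonneg (ht0 k).le]
    calc t k * ‖g k‖ ≤ t k * 1 := by
          exact mul_le_mul_of_nonneg_left (hgnorm k) (ht0 k).le
      _ = t k := mul_one _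
      _ ≤ r ^ k := htr k
  have hF : HasSum f (kummer2F2 m q x y) := by
    have h : kummer2F2 m q x y = ∑' k, f k := rfl
    rw [h]
    exact hsumf.hasSum
  have hre_im := (Complex.hasSum_iff f (kummer2F2 m q x y)).mp hF
  have hFre : HasSum (fun k => t k * (g k).re) (kummer2F2 m q x y).re := by
    have heq : (fun k => (f k).re) = fun k => t k * (g k).re := by
      funext k; simp only [hfdef]; exact Complex.re_ofReal_mul _ _
    exact heq ▸ hre_im.1
  have hFim : HasSum (fun k => t k * (g k).im) (kummer2F2 m q x y).im := by
    have heq : (fun k => (f k).im) = fun k => t k * (g k).im := by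
      funext k; simp only [hfdef]; exact Complex.im_ofReal_mul _ _
    exact heq ▸ hre_im.2
  have hK : HasSum t (kummer1F1 m y) := by
    have h : kummer1F1 m y = ∑' k, t k := rfl
    rw [h]
    exact hsumt.hasSum
  -- geometric-type sums
  have g1 : HasSum (fun n : ℕ => (n:ℝ) * r ^ n) (r / (1 - r) ^ 2) :=
    hasSum_coe_mul_geometric_of_norm_lt_one (by rwa [Real.norm_eq_abs, _root_.abs_of_pos hr0])
  have g2 : HasSum (fun n : ℕ => r ^ n) ((1 - r)⁻¹) := hasSum_geometric_of_lt_one hr0.le hr1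
  have hKsum : HasSum (fun k : ℕ => (k:ℝ) * r ^ (k - 1)) (1 / (1 - r) ^ 2) := by
    have g3 := g1.add g2
    have heq : (fun n : ℕ => ((n + 1 : ℕ):ℝ) * r ^ ((n + 1) - 1))
        = fun n : ℕ => (n:ℝ) * r ^ n + r ^ n := by
      funext n
      push_cast [Nat.add_sub_cancel]
      ring
    have g4 : HasSum (fun n : ℕ => ((n + 1 : ℕ):ℝ) * r ^ ((n + 1) - 1))
        (r / (1 - r) ^ 2 + (1 - r)⁻¹) := heq ▸ g3
    have g5 := (hasSum_nat_add_iff (f := fun k : ℕ => (k:ℝ) * r ^ (k - 1)) 1).mp g4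
    have hval : r / (1 - r) ^ 2 + (1 - r)⁻¹ + ∑ i ∈ Finset.range 1,
        ((i:ℝ) * r ^ (i - 1)) = 1 / (1 - r) ^ 2 := by
      have h1r : 1 - r ≠ 0 := by linarith
      simp only [Finset.sum_range_one, Nat.cast_zero, zero_mul, add_zero]
      field_simp
      ring
    rwa [hval] at g5
  -- per-term bound, real part
  have e1 : ∀ k, (c^2 + x^2) / D k ≤ 1 := fun k => (div_le_one (hD0 k)).2 (hcxD k)
  have keyR : ∀ k : ℕ, |(c^2 + x^2) * (t k * ((g k).re - 1))|
      ≤ A * y * ((k:ℝ) * r ^ (k - 1)) := by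
    intro k
    rw [hgre1 k]
    have hE : (c^2 + x^2) * (t k * (-((k:ℝ) * (c + (k:ℝ))) / D k))
        = -((c^2 + x^2) * (t k * (((k:ℝ) * (c + (k:ℝ))) / D k))) := by ring
    have hEnn : 0 ≤ (c^2 + x^2) * (t k * (((k:ℝ) * (c + (k:ℝ))) / D k)) := by
      apply mul_nonneg hcx0
      apply mul_nonneg (ht0 k).le
      apply div_nonneg _ (hD0 k).le
      exact mul_nonneg (Nat.cast_nonneg k) (hck k).le
    rw [hE, abs_neg, _root_.abs_of_nonneg hEnn]
    cases k with
    | zero => simp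
    | succ j =>
      have hPj := hP j
      have hj0 : (0:ℝ) ≤ (j:ℝ) := Nat.cast_nonneg j
      have hfac : (0:ℝ) < M + 2 + (j:ℝ) := by linarith
      have hjc : ((j + 1 : ℕ):ℝ) = (j:ℝ) + 1 := by push_cast; ring
      have hA2 : (c + ((j+1 : ℕ):ℝ)) / (M + 2 + (j:ℝ)) ≤ A := by
        rw [hAdef, div_le_div_iff₀ hfac h02, hjc, hcdef]
        nlinarith [mul_nonneg (by linarith : (0:ℝ) ≤ M + 2) (by linarith : (0:ℝ) ≤ 1 - q)]
      have htrj : y ^ j / ∏ i ∈ Finset.range j, (M + 2 + (i : ℝ)) ≤ r ^ j := htr j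
      have e2 : t (j+1) * (c + ((j+1 : ℕ):ℝ)) ≤ A * (y * r ^ j) := by
        have hsplit : t (j+1) * (c + ((j+1 : ℕ):ℝ))
            = (y ^ j / ∏ i ∈ Finset.range j, (M + 2 + (i : ℝ)))
              * ((c + ((j+1 : ℕ):ℝ)) / (M + 2 + (j:ℝ))) * y := by
          simp only [htdef]
          rw [Finset.prod_range_succ, pow_succ, div_mul_eq_mul_div, div_mul_div_comm,
            div_mul_eq_mul_div]
          congr 1
          ring
        rw [hsplit]
        calc (y ^ j / ∏ i ∈ Finset.range j, (M + 2 + (i : ℝ)))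
              * ((c + ((j+1 : ℕ):ℝ)) / (M + 2 + (j:ℝ))) * y
            ≤ (r ^ j * A) * y := by
              apply mul_le_mul_of_nonneg_right _ hy.le
              apply mul_le_mul htrj hA2
              · exact div_nonneg (hck (j+1)).le hfac.le
              · exact pow_nonneg hr0.le j
          _ = A * (y * r ^ j) := by ring
      have hjnn : (0:ℝ) ≤ ((j+1 : ℕ):ℝ) := Nat.cast_nonneg _
      have hnn2 : 0 ≤ (t (j+1) * (c + ((j+1 : ℕ):ℝ))) * ((j+1 : ℕ):ℝ) := by
        apply mul_nonneg _ hjnn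
        exact mul_nonneg (ht0 _).le (hck (j+1)).le
      calc (c^2 + x^2) * (t (j+1) * ((((j+1 : ℕ)):ℝ) * (c + ((j+1 : ℕ):ℝ)) / D (j+1)))
          = ((c^2 + x^2) / D (j+1)) * ((t (j+1) * (c + ((j+1 : ℕ):ℝ))) * ((j+1 : ℕ):ℝ)) := by
            ring
        _ ≤ 1 * ((A * (y * r ^ j)) * ((j+1 : ℕ):ℝ)) := by
            apply mul_le_mul (e1 (j+1)) (mul_le_mul_of_nonneg_right e2 hjnn) hnn2 zero_le_one
        _ = A * y * (((j+1 : ℕ):ℝ) * r ^ ((j+1) - 1)) := by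
            simp only [Nat.add_sub_cancel]
            ring
  -- per-term bound, imaginary part
  have keyI : ∀ k : ℕ, |(c^2 + x^2) * (t k * (g k).im)| ≤ |x| * ((k:ℝ) * r ^ k) := by
    intro k
    rw [hgim k]
    have hE : (c^2 + x^2) * (t k * ((k:ℝ) * x / D k))
        = ((c^2 + x^2) * (t k * (k:ℝ) / D k)) * x := by ring
    have hEnn : 0 ≤ (c^2 + x^2) * (t k * (k:ℝ) / D k) := by
      apply mul_nonneg hcx0
      apply div_nonneg _ (hD0 k).le
      exact mul_nonneg (ht0 k).le (Nat.cast_nonneg k)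
    rw [hE, abs_mul, _root_.abs_of_nonneg hEnn, mul_comm (|x|) _]
    apply mul_le_mul_of_nonneg_right _ (abs_nonneg x)
    calc (c^2 + x^2) * (t k * (k:ℝ) / D k)
        = ((c^2 + x^2) / D k) * t k * (k:ℝ) := by ring
      _ ≤ 1 * r ^ k * (k:ℝ) := by
          apply mul_le_mul_of_nonneg_right _ (Nat.cast_nonneg k)
          apply mul_le_mul (e1 k) (htr k) (ht0 k).le zero_le_one
      _ = (k:ℝ) * r ^ k := by ring
  -- the two HasSum statements giving the differences
  have hU : HasSum (fun k => t k * ((g k).re - 1))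
      ((kummer2F2 m q x y).re - kummer1F1 m y) := by
    have := hFre.sub hK
    simpa [mul_sub] using this
  have hUc : HasSum (fun k => (c^2 + x^2) * (t k * ((g k).re - 1)))
      ((c^2 + x^2) * ((kummer2F2 m q x y).re - kummer1F1 m y)) := hU.mul_left _
  have hVc : HasSum (fun k => (c^2 + x^2) * (t k * (g k).im))
      ((c^2 + x^2) * (kummer2F2 m q x y).im) := hFim.mul_left _
  have hBR : HasSum (fun k : ℕ => A * y * ((k:ℝ) * r ^ (k - 1)))
      (A * y * (1 / (1 - r) ^ 2)) := hKsum.mul_left _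
  have hBI : HasSum (fun k : ℕ => |x| * ((k:ℝ) * r ^ k)) (|x| * (r / (1 - r) ^ 2)) :=
    g1.mul_left _
  -- numeric bounds
  have h1rne : (1:ℝ) - r > 0 := by linarith
  have hMy : 0 < M + 2 - y := by linarith
  have hpoly : (M + 4) * (M + 2) ≤ 5 * (M + 2 - y) ^ 2 := by
    nlinarith [sq_nonneg (M - 2 * y), hy, hm, hM1]
  have hnumR : A * y * (1 / (1 - r) ^ 2) ≤ 5 * y := by
    have h1r : 1 - r = (M + 2 - y) / (M + 2) := by
      rw [hrdef]; field_simp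
    have hAle : A * (1 / (1 - r) ^ 2) ≤ 5 := by
      rw [h1r, hAdef, one_div, div_pow, inv_div, div_mul_div_comm,
        div_le_iff₀ (by positivity)]
      nlinarith [mul_le_mul_of_nonneg_left hpoly h02.le]
    calc A * y * (1 / (1 - r) ^ 2) = (A * (1 / (1 - r) ^ 2)) * y := by ring
      _ ≤ 5 * y := mul_le_mul_of_nonneg_right hAle hy.le
  have hnumI : |x| * (r / (1 - r) ^ 2) ≤ 5 * |x| := by
    have h5 : r / (1 - r) ^ 2 ≤ 5 := by
      rw [div_le_iff₀ (by positivity)]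
      nlinarith [sq_nonneg (1 - r)]
    calc |x| * (r / (1 - r) ^ 2) ≤ |x| * 5 := mul_le_mul_of_nonneg_left h5 (abs_nonneg x)
      _ = 5 * |x| := by ring
  constructor
  · calc (c ^ 2 + x ^ 2) * |(kummer2F2 m q x y).re - kummer1F1 m y|
        = |(c ^ 2 + x ^ 2) * ((kummer2F2 m q x y).re - kummer1F1 m y)| := by
          rw [abs_mul, _root_.abs_of_nonneg hcx0]
      _ ≤ A * y * (1 / (1 - r) ^ 2) := abs_hasSum_le hUc hBR keyR
      _ ≤ 5 * y := hnumR
  · calc (c ^ 2 + x ^ 2) * |(kummer2F2 m q x y).im|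
        = |(c ^ 2 + x ^ 2) * (kummer2F2 m q x y).im| := by
          rw [abs_mul, _root_.abs_of_nonneg hcx0]
      _ ≤ |x| * (r / (1 - r) ^ 2) := abs_hasSum_le hVc hBI keyI
      _ ≤ 5 * |x| := hnumI
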